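/- Let p be an odd prime and let n ≥ 1 be an integer. There exists a matrix A in the general linear group GL_n(𝔽₂) of invertible n×n matrices over the field with two elements with A^p = I and A ≠ I if and only if there exists an integer k with 1 ≤ k ≤ n such that p divides 2^k − 1 (equivalently, if and only if the multiplicative order of 2 modulo p is at most n). -/

import Mathlib

/-- For an odd prime `p` there is a matrix `A ∈ GL_n(𝔽₂)` with `A^p = I` and
`A ≠ I` iff `p` divides `2^k - 1` for some `1 ≤ k ≤ n` (equivalently, the
multiplicative order of `2` mod `p` is at most `n`). -/
theorem exists_gl_order_p_iff (p n : ℕ) (hp : p.Prime) (hodd : Odd p)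
    (hn : 1 ≤ n) :
    (∃ A : Matrix.GeneralLinearGroup (Fin n) (ZMod 2), A ^ p = 1 ∧ A ≠ 1) ↔
      ∃ k : ℕ, 1 ≤ k ∧ k ≤ n ∧ p ∣ 2 ^ k - 1 := by
  have hFact : Fact p.Prime := ⟨hp⟩
  have hp2 : p ≠ 2 := by
    rintro rfl
    exact (Nat.not_odd_iff_even.2 even_two) hodd
  have hnd2 : ¬ p ∣ 2 := fun h => hp2 ((Nat.prime_dvd_prime_iff_eq hp Nat.prime_two).1 h)
  have hcard : Nat.card (GL (Fin n) (ZMod 2)) = ∏ i : Fin n, (2 ^ n - 2 ^ (i : ℕ)) := by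
    have := Matrix.card_GL_field (𝔽 := ZMod 2) n
    simpa using this
  have key : (∀ {i : ℕ}, i ≤ n → 2 ^ (n - i) * (2 ^ i - 1) = 2 ^ n - 2 ^ (n - i)) := by
    intro i hi
    have h1 : (1:ℕ) ≤ 2 ^ i := Nat.one_le_two_pow
    rw [Nat.mul_sub, mul_one, ← pow_add]
    congr 2
    omega
  constructor
  · rintro ⟨A, hAp, hA1⟩
    have hord : orderOf A = p := by
      rcases (Nat.dvd_prime hp).1 (orderOf_dvd_of_pow_eq_one hAp) with h | h
      · exact absurd (orderOf_eq_one_iff.1 h) hA1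
      · exact h
    have hdvd : p ∣ Nat.card (GL (Fin n) (ZMod 2)) := hord ▸ orderOf_dvd_natCard A
    rw [hcard] at hdvd
    obtain ⟨i, -, hi⟩ := hp.prime.exists_mem_finset_dvd hdvd
    have hin : (i : ℕ) < n := i.isLt
    have : p ∣ 2 ^ (i : ℕ) * (2 ^ (n - i) - 1) := by
      have := key (i := (n - i : ℕ)) (Nat.sub_le _ _)
      rw [Nat.sub_sub_self hin.le] at this
      rwa [this]
    rcases (hp.prime.dvd_mul).1 this with h | h
    · exact absurd (hp.prime.dvd_of_dvd_pow h) hnd2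
    · exact ⟨n - i, by omega, by omega, h⟩
  · rintro ⟨k, hk1, hkn, hdvd⟩
    have hdvd' : p ∣ Nat.card (GL (Fin n) (ZMod 2)) := by
      rw [hcard]
      have hfac : p ∣ 2 ^ n - 2 ^ (n - k) := by
        rw [← key hkn]
        exact Dvd.dvd.mul_left hdvd _
      exact hfac.trans (Finset.dvd_prod_of_mem _ (Finset.mem_univ (⟨n - k, by omega⟩ : Fin n)))
    obtain ⟨A, hA⟩ := exists_prime_orderOf_dvd_card' p hdvd'
    exact ⟨A, hA ▸ pow_orderOf_eq_one A, fun h => hp.one_lt.ne' (by rw [h, orderOf_one] at hA; exact hA.symm)⟩
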